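/- Let q be a prime with q ≡ 1 (mod 3), and let p be an integer not divisible by q. Then for every integer j, Σ_{ν=0}^{q−1} ζ_q^{jν − 4pν³} ≠ 0. Equivalently, for such q the set of points of constancy 𝔓(p/q) is empty. -/

import Mathlib

open Finset Polynomial

/-- ζ_m = exp(2πi/m), the primitive m-th root of unity. -/
noncomputable def zeta (m : ℕ) : ℂ := Complex.exp (2 * Real.pi * Complex.I / (m : ℂ))

/-- Sum of `x ^ (q-1)` over a prime field is `-1`. -/
lemma aux_sum_pow_card_sub_one (q : ℕ) [Fact q.Prime] :
    ∑ x : ZMod q, x ^ (q - 1) = -1 := by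
  have hq : q.Prime := Fact.out
  have h2 : 2 ≤ q := hq.two_le
  have h0 : (0 : ZMod q) ∈ (Finset.univ : Finset (ZMod q)) := Finset.mem_univ _
  rw [← Finset.sum_erase_add _ _ h0]
  have hz : (0 : ZMod q) ^ (q - 1) = 0 := zero_pow (by omega)
  have hone : ∀ x ∈ (Finset.univ : Finset (ZMod q)).erase 0, x ^ (q - 1) = 1 := by
    intro x hx
    exact ZMod.pow_card_sub_one_eq_one (Finset.ne_of_mem_erase hx)
  rw [Finset.sum_congr rfl hone, Finset.sum_const, hz, add_zero]
  rw [Finset.card_erase_of_mem h0, Finset.card_univ, ZMod.card]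
  simp only [nsmul_eq_mul, mul_one]
  have : ((q - 1 : ℕ) : ZMod q) = (q : ZMod q) - 1 := by
    push_cast [Nat.cast_sub hq.one_le]
    ring
  rw [this, ZMod.natCast_self, zero_sub]

/-- Hermite-type criterion: `x ↦ b x + a x³` is not bijective on `ZMod q`
when `q ≡ 1 (mod 3)` is prime and `a ≠ 0`. -/
lemma aux_not_bijective (q : ℕ) (hq : q.Prime) (hq1 : q % 3 = 1)
    (a b : ZMod q) (ha : a ≠ 0) :
    ¬ Function.Bijective (fun x : ZMod q => b * x + a * x ^ 3) := by
  haveI : Fact q.Prime := ⟨hq⟩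
  have hq2 : 2 ≤ q := hq.two_le
  have hq4 : 4 ≤ q := by omega
  set m : ℕ := (q - 1) / 3 with hm
  have h3m : 3 * m = q - 1 := by omega
  have hm1 : 1 ≤ m := by omega
  intro hbij
  have hsum1 : ∑ x : ZMod q, (b * x + a * x ^ 3) ^ m = ∑ y : ZMod q, y ^ m :=
    Function.Bijective.sum_comp hbij (fun y => y ^ m)
  have hsum2 : ∑ y : ZMod q, y ^ m = 0 := by
    have := FiniteField.sum_pow_lt_card_sub_one (K := ZMod q) m (by rw [ZMod.card]; omega)
    exact this
  -- expand binomially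
  have hexp : ∑ x : ZMod q, (b * x + a * x ^ 3) ^ m = -(a ^ m) := by
    have hpt : ∀ x : ZMod q, (b * x + a * x ^ 3) ^ m
        = ∑ i ∈ Finset.range (m + 1),
            b ^ i * a ^ (m - i) * (m.choose i : ZMod q) * x ^ (i + 3 * (m - i)) := by
      intro x
      rw [add_pow]
      apply Finset.sum_congr rfl
      intro i _
      rw [pow_add, pow_mul, mul_pow, mul_pow]
      ring
    calc ∑ x : ZMod q, (b * x + a * x ^ 3) ^ m
        = ∑ i ∈ Finset.range (m + 1),
            b ^ i * a ^ (m - i) * (m.choose i : ZMod q) * ∑ x : ZMod q, x ^ (i + 3 * (m - i)) := by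
          rw [Finset.sum_congr rfl (fun x _ => hpt x), Finset.sum_comm]
          exact Finset.sum_congr rfl (fun i _ => (Finset.mul_sum _ _ _).symm)
      _ = -(a ^ m) := by
          rw [Finset.sum_eq_single 0]
          · have : (0 : ℕ) + 3 * (m - 0) = q - 1 := by omega
            rw [this, aux_sum_pow_card_sub_one q]
            simp
          · intro i hi hi0
            have hi' : i < m + 1 := Finset.mem_range.mp hi
            have : ∑ x : ZMod q, x ^ (i + 3 * (m - i)) = 0 := by
              apply FiniteField.sum_pow_lt_card_sub_one
              rw [ZMod.card]
              omega
            rw [this, mul_zero]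
          · intro h
            exact absurd (Finset.mem_range.mpr (by omega)) h
  rw [hsum1, hsum2] at hexp
  exact ha (pow_eq_zero_iff (by omega : m ≠ 0) |>.mp (neg_eq_zero.mp hexp.symm))

/-- For a prime q ≡ 1 (mod 3) and an integer p not divisible by q,
the even partial Kummer sum Σ_{ν=0}^{q−1} ζ_q^{jν − 4pν³} never vanishes:
the set of points of constancy is empty. -/
theorem no_points_of_constancy_q_one_mod_three
    (q : ℕ) (hq : q.Prime) (hq1 : q % 3 = 1) (p : ℤ) (hp : ¬ (q : ℤ) ∣ p) (j : ℤ) :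
    (∑ ν ∈ Finset.range q, zeta q ^ (j * (ν : ℤ) - 4 * p * (ν : ℤ) ^ 3)) ≠ 0 := by
  haveI : Fact q.Prime := ⟨hq⟩
  have hq0 : q ≠ 0 := hq.pos.ne'
  have hq2 : 2 ≤ q := hq.two_le
  set ζ : ℂ := zeta q with hzeta
  have hζ : IsPrimitiveRoot ζ q := Complex.isPrimitiveRoot_exp q hq0
  have hζq : ζ ^ q = 1 := hζ.pow_eq_one
  have hζ0 : ζ ≠ 0 := by
    intro h
    rw [h] at hζq
    simp [zero_pow hq0] at hζq
  have hζ1 : ζ ≠ 1 := hζ.ne_one (by omega)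
  -- powers only depend on exponent mod q
  have hmod : ∀ s t : ℕ, s % q = t % q → ζ ^ s = ζ ^ t := by
    have key : ∀ s : ℕ, ζ ^ s = ζ ^ (s % q) := by
      intro s
      conv_lhs => rw [← Nat.div_add_mod s q]
      rw [pow_add, pow_mul, hζq, one_pow, one_mul]
    intro s t h
    rw [key s, key t, h]
  -- the additive character
  set χ : ZMod q → ℂ := fun u => ζ ^ u.val with hχ
  have hχadd : ∀ u v : ZMod q, χ (u + v) = χ u * χ v := by
    intro u v
    simp only [hχ]
    rw [← pow_add]
    refine hmod _ _ ?_
    rw [ZMod.val_add]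
    exact Nat.mod_mod_of_dvd _ dvd_rfl
  have hχmul : ∀ u v : ZMod q, χ (u * v) = (ζ ^ u.val) ^ v.val := by
    intro u v
    simp only [hχ]
    rw [← pow_mul]
    refine hmod _ _ ?_
    rw [ZMod.val_mul]
    exact (Nat.mod_mod_of_dvd _ dvd_rfl).symm ▸ rfl
  have hχ0 : χ 0 = 1 := by simp [hχ, ZMod.val_zero]
  -- reindexing sums
  have hreindex : ∀ g : ZMod q → ℂ,
      ∑ ν ∈ Finset.range q, g (ν : ZMod q) = ∑ x : ZMod q, g x := by
    intro g
    refine Finset.sum_nbij' (fun ν => (ν : ZMod q)) (fun x => x.val) ?_ ?_ ?_ ?_ ?_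
    · intro a _; exact Finset.mem_univ _
    · intro x _; exact Finset.mem_range.mpr (ZMod.val_lt x)
    · intro a ha
      show ((a : ZMod q)).val = a
      rw [ZMod.val_natCast, Nat.mod_eq_of_lt (Finset.mem_range.mp ha)]
    · intro x _; exact ZMod.natCast_rightInverse x
    · intro a _; rfl
  -- integer powers
  have hint : ∀ a : ℤ, ζ ^ a = χ ((a : ZMod q)) := by
    intro a
    have hb : (((a : ZMod q)).val : ℤ) = a % q := ZMod.val_intCast a
    have h1 : ζ ^ a = ζ ^ (a % q) := by
      conv_lhs => rw [← Int.mul_ediv_add_emod a q]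
      rw [zpow_add₀ hζ0, zpow_mul, zpow_natCast, hζq, one_zpow, one_mul]
    rw [h1, ← hb, zpow_natCast]
  -- the sum over univ
  intro hS
  set f : ZMod q → ZMod q := fun x => (j : ZMod q) * x - 4 * (p : ZMod q) * x ^ 3 with hf
  have hterm : ∀ ν : ℕ, ζ ^ (j * (ν : ℤ) - 4 * p * (ν : ℤ) ^ 3) = χ (f (ν : ZMod q)) := by
    intro ν
    rw [hint]
    congr 1
    simp only [hf]
    push_cast
    ring
  have hSval : ∑ x : ZMod q, χ (f x) = 0 := by
    rw [← hreindex (fun x => χ (f x))]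
    rw [← Finset.sum_congr rfl (fun ν _ => hterm ν)]
    exact hS
  -- polynomial
  set P : Polynomial ℚ := ∑ x : ZMod q, Polynomial.X ^ (f x).val with hP
  have hPeval : ∀ z : ℂ, Polynomial.aeval z P = ∑ x : ZMod q, z ^ (f x).val := by
    intro z
    rw [hP, map_sum]
    exact Finset.sum_congr rfl (fun x _ => by rw [map_pow, Polynomial.aeval_X])
  have hPζ : Polynomial.aeval ζ P = 0 := by
    rw [hPeval]
    exact hSval
  have hdvd : Polynomial.cyclotomic q ℚ ∣ P := by
    rw [Polynomial.cyclotomic_eq_minpoly_rat hζ hq.pos]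
    exact minpoly.dvd ℚ ζ hPζ
  have hPa : ∀ a : ZMod q, a ≠ 0 → ∑ x : ZMod q, (ζ ^ a.val) ^ (f x).val = 0 := by
    intro a ha
    have hval : ¬ q ∣ a.val := by
      intro hdv
      rcases Nat.eq_zero_of_dvd_of_lt hdv (ZMod.val_lt a) with h
      exact ha (by rwa [← ZMod.val_eq_zero])
    have hcop : a.val.Coprime q := Nat.Coprime.symm ((Nat.Prime.coprime_iff_not_dvd hq).mpr hval)
    have hprim : IsPrimitiveRoot (ζ ^ a.val) q := hζ.pow_of_coprime a.val hcop
    obtain ⟨R, hR⟩ := hdvd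
    have h0 : Polynomial.aeval (ζ ^ a.val) P = 0 := by
      rw [hR, map_mul]
      rw [Polynomial.cyclotomic_eq_minpoly_rat hprim hq.pos, minpoly.aeval, zero_mul]
    rwa [hPeval] at h0
  -- orthogonality
  have hsum0 : ∑ x : ZMod q, χ x = 0 := by
    rw [← hreindex χ]
    have hcongr : ∀ ν ∈ Finset.range q, χ ((ν : ZMod q)) = ζ ^ ν := by
      intro ν _
      simp only [hχ]
      refine hmod _ _ ?_
      rw [ZMod.val_natCast]
      exact Nat.mod_mod_of_dvd _ dvd_rfl
    rw [Finset.sum_congr rfl hcongr, geom_sum_eq hζ1, hζq, sub_self, zero_div]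
  have horth : ∀ d : ZMod q, d ≠ 0 → ∑ a : ZMod q, χ (a * d) = 0 := by
    intro d hd
    have hbij : Function.Bijective (fun a : ZMod q => a * d) := by
      refine (Finite.injective_iff_bijective).mp ?_
      exact fun x y hxy => mul_right_cancel₀ hd hxy
    rw [Function.Bijective.sum_comp hbij χ]
    exact hsum0
  -- fibers all have one element
  have hfiber : ∀ c : ZMod q,
      (Finset.univ.filter (fun x => f x = c)).card = 1 := by
    intro c
    have hD1 : ∑ a : ZMod q, ∑ x : ZMod q, χ (a * (f x - c)) = (q : ℂ) := by
      rw [Finset.sum_eq_single 0]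
      · simp only [zero_mul, hχ0]
        rw [Finset.sum_const, Finset.card_univ, ZMod.card, nsmul_eq_mul, mul_one]
      · intro a _ ha
        have step : ∀ x : ZMod q, χ (a * (f x - c)) = χ (a * f x) * χ (-(a * c)) := by
          intro x
          rw [← hχadd]
          congr 1
          ring
        rw [Finset.sum_congr rfl (fun x _ => step x), ← Finset.sum_mul]
        have : ∑ x : ZMod q, χ (a * f x) = 0 := by
          rw [Finset.sum_congr rfl (fun x _ => hχmul a (f x))]
          exact hPa a ha
        rw [this, zero_mul]
      · intro h; exact absurd (Finset.mem_univ _) h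
    have hD2 : ∑ a : ZMod q, ∑ x : ZMod q, χ (a * (f x - c))
        = (q : ℂ) * ((Finset.univ.filter (fun x => f x = c)).card : ℂ) := by
      rw [Finset.sum_comm]
      have step : ∀ x : ZMod q, ∑ a : ZMod q, χ (a * (f x - c))
          = if f x = c then (q : ℂ) else 0 := by
        intro x
        by_cases hx : f x = c
        · rw [if_pos hx]
          have : f x - c = 0 := by rw [hx, sub_self]
          simp only [this, mul_zero, hχ0]
          rw [Finset.sum_const, Finset.card_univ, ZMod.card, nsmul_eq_mul, mul_one]
        · rw [if_neg hx]
          exact horth _ (sub_ne_zero.mpr hx)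
      rw [Finset.sum_congr rfl (fun x _ => step x), ← Finset.sum_filter, Finset.sum_const,
        nsmul_eq_mul, mul_comm]
    have hqC : (q : ℂ) ≠ 0 := Nat.cast_ne_zero.mpr hq0
    have := hD1.symm.trans hD2
    field_simp at this
    exact_mod_cast this.symm
  -- f is bijective
  have hbijf : Function.Bijective f := by
    rw [Function.bijective_iff_existsUnique]
    intro c
    obtain ⟨x, hx⟩ := Finset.card_eq_one.mp (hfiber c)
    have hxmem : x ∈ Finset.univ.filter (fun y => f y = c) := by
      rw [hx]; exact Finset.mem_singleton_self x
    refine ⟨x, (Finset.mem_filter.mp hxmem).2, ?_⟩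
    intro y hy
    have : y ∈ Finset.univ.filter (fun z => f z = c) :=
      Finset.mem_filter.mpr ⟨Finset.mem_univ _, hy⟩
    rw [hx] at this
    exact Finset.mem_singleton.mp this
  -- contradiction with Hermite
  have ha : (-(4 * (p : ZMod q)) : ZMod q) ≠ 0 := by
    rw [neg_ne_zero]
    intro h
    have : ((4 * p : ℤ) : ZMod q) = 0 := by push_cast; exact h
    rw [ZMod.intCast_zmod_eq_zero_iff_dvd] at this
    rcases (Int.Prime.dvd_mul' hq this) with h4 | hpp
    · have : (q : ℤ) ∣ (4 : ℤ) := h4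
      have hq4 : q ∣ 4 := by exact_mod_cast this
      have : q ≤ 4 := Nat.le_of_dvd (by norm_num) hq4
      have hq4' : q = 4 := by omega
      rw [hq4'] at hq
      norm_num at hq
    · exact hp hpp
  refine aux_not_bijective q hq hq1 (-(4 * (p : ZMod q))) (j : ZMod q) ha ?_
  have : (fun x : ZMod q => (j : ZMod q) * x + -(4 * (p : ZMod q)) * x ^ 3) = f := by
    funext x
    simp only [hf]
    ring
  rw [this]
  exact hbijf
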